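/- Define integers m_R(i,j) for a polygon dissection R of the (n+3)-gon P by: m_R(i,i)=0; m_R(i,j)=1 if j lies in a piece of the dissection containing i; and m_R(i,j) = m_R(i,k) + m_R(i,ℓ) whenever (k,ℓ) is a diagonal of R bounding a piece containing j, with the values at k,ℓ already defined. Then m_R is symmetric: m_R(i,j) = m_R(j,i) for all vertices i, j of P. -/
import Mathlib


/-- `x` lies strictly between `a` and `b` in the cyclic order on the vertices
`ZMod m` of a convex `m`-gon. -/
def StrBtw (m : ℕ) [NeZero m] (a x b : ZMod m) : Prop :=
  (x - a).val ≠ 0 ∧ (x - a).val < (b - a).val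

/-- Two chords of the `m`-gon (given by their pairs of endpoints) cross:
the endpoints of one strictly separate the endpoints of the other. -/
def Crosses (m : ℕ) [NeZero m] (d d' : ZMod m × ZMod m) : Prop :=
  (StrBtw m d.1 d'.1 d.2 ∧ StrBtw m d.2 d'.2 d.1) ∨
  (StrBtw m d.1 d'.2 d.2 ∧ StrBtw m d.2 d'.1 d.1)

theorem val_sub' (m : ℕ) [NeZero m] (a b : ZMod m) :
    (a - b).val = if b.val ≤ a.val then a.val - b.val else a.val + m - b.val := by
  split_ifs with h
  · exact ZMod.val_sub h
  · have hb : b ≠ 0 := by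
      intro hb; subst hb; simp [ZMod.val_zero] at h
    have : a - b = a + -b := by ring
    rw [this, ZMod.val_add, ZMod.val_neg_of_ne_zero (na := ⟨hb⟩)]
    have ha := ZMod.val_lt a
    have hbv := ZMod.val_lt b
    have : a.val + (m - b.val) < m := by omega
    rw [Nat.mod_eq_of_lt this]; omega

theorem crosses_iff (m : ℕ) [NeZero m] (j a b u v : ZMod m) :
    Crosses m (a, b) (u, v) ↔
      ((min (a-j).val (b-j).val < (u-j).val ∧ (u-j).val < max (a-j).val (b-j).val) ∧
        ((v-j).val < min (a-j).val (b-j).val ∨ max (a-j).val (b-j).val < (v-j).val)) ∨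
      ((min (a-j).val (b-j).val < (v-j).val ∧ (v-j).val < max (a-j).val (b-j).val) ∧
        ((u-j).val < min (a-j).val (b-j).val ∨ max (a-j).val (b-j).val < (u-j).val)) := by
  have key : ∀ x y : ZMod m, (x - y).val =
      if (y-j).val ≤ (x-j).val then (x-j).val - (y-j).val else (x-j).val + m - (y-j).val := by
    intro x y
    have : x - y = (x - j) - (y - j) := by ring
    rw [this, val_sub']
  have ha := ZMod.val_lt (a - j); have hb := ZMod.val_lt (b - j)
  have hu := ZMod.val_lt (u - j); have hv := ZMod.val_lt (v - j)
  unfold Crosses StrBtw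
  rw [key u a, key b a, key v b, key a b, key v a, key u b]
  split_ifs <;> omega

theorem pv_inj {m : ℕ} [NeZero m] {j x y : ZMod m} (h : (x - j).val = (y - j).val) : x = y := by
  have : x - j = y - j := ZMod.val_injective _ h
  exact sub_left_injective this

theorem crosses_swap_left {m : ℕ} [NeZero m] (a b : ZMod m) (d : ZMod m × ZMod m) :
    Crosses m (a, b) d ↔ Crosses m (b, a) d := by
  unfold Crosses; tauto

theorem crosses_swap_right {m : ℕ} [NeZero m] (d : ZMod m × ZMod m) (u v : ZMod m) :
    Crosses m d (u, v) ↔ Crosses m d (v, u) := by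
  unfold Crosses; exact or_comm

theorem hnc_flex {m : ℕ} [NeZero m] {D : Finset (ZMod m × ZMod m)}
    (hnc : ∀ d ∈ D, ∀ d' ∈ D, ¬ Crosses m d d') {u v u' v' : ZMod m}
    (h1 : (u, v) ∈ D ∨ (v, u) ∈ D) (h2 : (u', v') ∈ D ∨ (v', u') ∈ D) :
    ¬ Crosses m (u, v) (u', v') := by
  rcases h1 with h1 | h1 <;> rcases h2 with h2 | h2 <;> intro hc
  · exact hnc _ h1 _ h2 hc
  · exact hnc _ h1 _ h2 ((crosses_swap_right _ u' v').mp hc)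
  · exact hnc _ h1 _ h2 ((crosses_swap_left u v _).mp hc)
  · exact hnc _ h1 _ h2 ((crosses_swap_right _ u' v').mp ((crosses_swap_left u v _).mp hc))

theorem exists_near {m : ℕ} [NeZero m] {D : Finset (ZMod m × ZMod m)}
    (hnc : ∀ d ∈ D, ∀ d' ∈ D, ¬ Crosses m d d') (i j : ZMod m)
    (hA : ∃ d ∈ D, Crosses m (i, j) d) :
    ∃ k l : ZMod m, ((k, l) ∈ D ∨ (l, k) ∈ D) ∧
      0 < (k - j).val ∧ (k - j).val < (i - j).val ∧ (i - j).val < (l - j).val ∧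
      (∀ d ∈ D, ¬ Crosses m (j, k) d) ∧ (∀ d ∈ D, ¬ Crosses m (j, l) d) := by
  classical
  have hij0 : (j - j).val = 0 := by simp
  have hIlt : (i - j).val < m := ZMod.val_lt _
  have cross_ij : ∀ u v : ZMod m, Crosses m (i, j) (u, v) ↔
      (0 < (u-j).val ∧ (u-j).val < (i-j).val ∧ (i-j).val < (v-j).val) ∨
      (0 < (v-j).val ∧ (v-j).val < (i-j).val ∧ (i-j).val < (u-j).val) := by
    intro u v
    rw [crosses_iff m j i j u v, hij0]
    omega
  have cross_jt : ∀ t u v : ZMod m, Crosses m (j, t) (u, v) ↔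
      (0 < (u-j).val ∧ (u-j).val < (t-j).val ∧ (t-j).val < (v-j).val) ∨
      (0 < (v-j).val ∧ (v-j).val < (t-j).val ∧ (t-j).val < (u-j).val) := by
    intro t u v
    rw [crosses_iff m j j t u v, hij0]
    omega
  set E := (D ∪ D.image Prod.swap).filter
    (fun d => 0 < (d.1-j).val ∧ (d.1-j).val < (i-j).val ∧ (i-j).val < (d.2-j).val) with hE
  have hmemE : ∀ u v : ZMod m, ((u,v) ∈ D ∨ (v,u) ∈ D) → 0 < (u-j).val →
      (u-j).val < (i-j).val → (i-j).val < (v-j).val → (u,v) ∈ E := by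
    intro u v hm h1 h2 h3
    rw [hE, Finset.mem_filter, Finset.mem_union]
    refine ⟨?_, h1, h2, h3⟩
    rcases hm with hm | hm
    · exact Or.inl hm
    · exact Or.inr (Finset.mem_image.mpr ⟨(v,u), hm, rfl⟩)
  have hEne : E.Nonempty := by
    obtain ⟨d, hd, hcr⟩ := hA
    rcases (cross_ij d.1 d.2).mp hcr with ⟨h1, h2, h3⟩ | ⟨h1, h2, h3⟩
    · exact ⟨(d.1, d.2), hmemE d.1 d.2 (Or.inl hd) h1 h2 h3⟩
    · exact ⟨(d.2, d.1), hmemE d.2 d.1 (Or.inr hd) h1 h2 h3⟩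
  obtain ⟨d₀, hd₀E, hmin⟩ := E.exists_min_image (fun d => (d.1-j).val + (m - (d.2-j).val)) hEne
  rw [hE, Finset.mem_filter, Finset.mem_union] at hd₀E
  obtain ⟨hd₀m, hK0, hKI, hIL⟩ := hd₀E
  have hd₀unord : (d₀.1, d₀.2) ∈ D ∨ (d₀.2, d₀.1) ∈ D := by
    rcases hd₀m with h | h
    · exact Or.inl h
    · obtain ⟨c, hc, hcd⟩ := Finset.mem_image.mp h
      right
      rw [← hcd]
      exact hc
  have hLlt : (d₀.2 - j).val < m := ZMod.val_lt _
  have minim : ∀ u v : ZMod m, ((u,v) ∈ D ∨ (v,u) ∈ D) → 0 < (u-j).val →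
      (u-j).val < (i-j).val → (i-j).val < (v-j).val →
      (d₀.1-j).val + (m - (d₀.2-j).val) ≤ (u-j).val + (m - (v-j).val) := by
    intro u v hm h1 h2 h3
    exact hmin (u,v) (hmemE u v hm h1 h2 h3)
  refine ⟨d₀.1, d₀.2, hd₀unord, hK0, hKI, hIL, ?_, ?_⟩
  · -- (j, k) is uncrossed
    have core : ∀ u v : ZMod m, ((u,v) ∈ D ∨ (v,u) ∈ D) → 0 < (u-j).val →
        (u-j).val < (d₀.1-j).val → (d₀.1-j).val < (v-j).val → False := by
      intro u v hm h1 h2 h3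
      have hVlt : (v - j).val < m := ZMod.val_lt _
      have hVL : (v-j).val < (d₀.2-j).val := by
        by_cases hVI : (v-j).val ≤ (i-j).val
        · omega
        · have := minim u v hm h1 (by omega) (by omega)
          omega
      exact hnc_flex hnc hm hd₀unord
        (by rw [crosses_iff m j u v d₀.1 d₀.2]; omega)
    intro d hd hcr
    rcases (cross_jt d₀.1 d.1 d.2).mp hcr with ⟨h1, h2, h3⟩ | ⟨h1, h2, h3⟩
    · exact core d.1 d.2 (Or.inl hd) h1 h2 h3
    · exact core d.2 d.1 (Or.inr hd) h1 h2 h3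
  · -- (j, l) is uncrossed
    have core : ∀ u v : ZMod m, ((u,v) ∈ D ∨ (v,u) ∈ D) → 0 < (u-j).val →
        (u-j).val < (d₀.2-j).val → (d₀.2-j).val < (v-j).val → False := by
      intro u v hm h1 h2 h3
      have hVlt : (v - j).val < m := ZMod.val_lt _
      by_cases hUK : (u-j).val ≤ (d₀.1-j).val
      · have := minim u v hm h1 (by omega) (by omega)
        omega
      · exact hnc_flex hnc hm hd₀unord
          (by rw [crosses_iff m j u v d₀.1 d₀.2]; omega)
    intro d hd hcr
    rcases (cross_jt d₀.2 d.1 d.2).mp hcr with ⟨h1, h2, h3⟩ | ⟨h1, h2, h3⟩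
    · exact core d.1 d.2 (Or.inl hd) h1 h2 h3
    · exact core d.2 d.1 (Or.inr hd) h1 h2 h3

section C
variable {m : ℕ} [NeZero m] {D : Finset (ZMod m × ZMod m)}
  (hnc : ∀ d ∈ D, ∀ d' ∈ D, ¬ Crosses m d d') {i j k l : ZMod m}
  (hklm : (k, l) ∈ D ∨ (l, k) ∈ D)
  (hK0 : 0 < (k - j).val) (hKI : (k - j).val < (i - j).val) (hIL : (i - j).val < (l - j).val)
  (hjk : ∀ d ∈ D, ¬ Crosses m (j, k) d) (hjl : ∀ d ∈ D, ¬ Crosses m (j, l) d)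

include hnc hklm hK0 hKI hIL hjk hjl

/-- C1: diagonals crossing `(i,k)` are exactly those crossing `(i,j)` avoiding `k`. -/
theorem cross_ik_iff (d : ZMod m × ZMod m) (hd : d ∈ D) :
    Crosses m (i, k) d ↔ Crosses m (i, j) d ∧ d.1 ≠ k ∧ d.2 ≠ k := by
  obtain ⟨u, v⟩ := d
  have hij0 : (j - j).val = 0 := by simp
  have hUlt : (u - j).val < m := ZMod.val_lt _
  have hVlt : (v - j).val < m := ZMod.val_lt _
  have hLlt : (l - j).val < m := ZMod.val_lt _
  have e1 : (u = k) ↔ (u-j).val = (k-j).val := ⟨fun h => by rw [h], pv_inj⟩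
  have e2 : (v = k) ↔ (v-j).val = (k-j).val := ⟨fun h => by rw [h], pv_inj⟩
  rw [crosses_iff m j i k u v, crosses_iff m j i j u v, hij0, Ne, Ne, e1, e2]
  -- helper: produce contradictions
  have cxkl : ∀ u' v' : ZMod m, ((u',v') ∈ D ∨ (v',u') ∈ D) →
      Crosses m (u', v') (k, l) → False := fun u' v' hm hc => hnc_flex hnc hm hklm hc
  constructor
  · rintro (⟨⟨h1, h2⟩, h3 | h3⟩ | ⟨⟨h1, h2⟩, h3 | h3⟩)
    · -- K < U < I, V < min K I = K : impossible
      exfalso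
      by_cases hV0 : (v - j).val = 0
      · exact cxkl u v (Or.inl hd) (by rw [crosses_iff m j u v k l]; omega)
      · exact hjk (u, v) hd (by rw [crosses_iff m j j k u v, hij0]; omega)
    · omega
    · exfalso
      by_cases hU0 : (u - j).val = 0
      · exact cxkl u v (Or.inl hd) (by rw [crosses_iff m j u v k l]; omega)
      · exact hjk (u, v) hd (by rw [crosses_iff m j j k u v, hij0]; omega)
    · omega
  · rintro ⟨⟨⟨h1, h2⟩, h3 | h3⟩ | ⟨⟨h1, h2⟩, h3 | h3⟩, hu, hv⟩ <;> [skip; skip; skip; skip] <;>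
    · by_cases hcase : (u-j).val < (k-j).val ∨ (v-j).val < (k-j).val
      · exfalso
        rcases hcase with hc | hc
        · exact hjk (u, v) hd (by rw [crosses_iff m j j k u v, hij0]; omega)
        · exact hjk (u, v) hd (by rw [crosses_iff m j j k u v, hij0]; omega)
      · omega

/-- C2: diagonals crossing `(i,l)` are exactly those crossing `(i,j)` avoiding `l`. -/
theorem cross_il_iff (d : ZMod m × ZMod m) (hd : d ∈ D) :
    Crosses m (i, l) d ↔ Crosses m (i, j) d ∧ d.1 ≠ l ∧ d.2 ≠ l := by
  obtain ⟨u, v⟩ := d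
  have hij0 : (j - j).val = 0 := by simp
  have hUlt : (u - j).val < m := ZMod.val_lt _
  have hVlt : (v - j).val < m := ZMod.val_lt _
  have hLlt : (l - j).val < m := ZMod.val_lt _
  have e1 : (u = l) ↔ (u-j).val = (l-j).val := ⟨fun h => by rw [h], pv_inj⟩
  have e2 : (v = l) ↔ (v-j).val = (l-j).val := ⟨fun h => by rw [h], pv_inj⟩
  rw [crosses_iff m j i l u v, crosses_iff m j i j u v, hij0, Ne, Ne, e1, e2]
  have cxkl : ∀ u' v' : ZMod m, ((u',v') ∈ D ∨ (v',u') ∈ D) →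
      Crosses m (u', v') (k, l) → False := fun u' v' hm hc => hnc_flex hnc hm hklm hc
  constructor
  · rintro (⟨⟨h1, h2⟩, h3 | h3⟩ | ⟨⟨h1, h2⟩, h3 | h3⟩)
    · -- I < U < L, V < I
      by_cases hV0 : (v - j).val = 0
      · exact absurd (by rw [crosses_iff m j u v k l]; omega : Crosses m (u,v) (k,l))
          (fun hc => cxkl u v (Or.inl hd) hc)
      · omega
    · -- I < U < L, L < V : crosses (j,l)
      exact absurd (by rw [crosses_iff m j j l u v, hij0]; omega : Crosses m (j,l) (u,v))
        (hjl (u, v) hd)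
    · by_cases hU0 : (u - j).val = 0
      · exact absurd (by rw [crosses_iff m j u v k l]; omega : Crosses m (u,v) (k,l))
          (fun hc => cxkl u v (Or.inl hd) hc)
      · omega
    · exact absurd (by rw [crosses_iff m j j l u v, hij0]; omega : Crosses m (j,l) (u,v))
        (hjl (u, v) hd)
  · rintro ⟨⟨⟨h1, h2⟩, h3 | h3⟩ | ⟨⟨h1, h2⟩, h3 | h3⟩, hu, hv⟩ <;>
    · by_cases hcase : (l-j).val < (u-j).val ∨ (l-j).val < (v-j).val
      · exfalso
        rcases hcase with hc | hc
        · exact hjl (u, v) hd (by rw [crosses_iff m j j l u v, hij0]; omega)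
        · exact hjl (u, v) hd (by rw [crosses_iff m j j l u v, hij0]; omega)
      · omega

/-- C3: a diagonal through `l` and a diagonal through `k`, both crossing `(i,j)`,
must share a vertex. -/
theorem share_vertex (d d' : ZMod m × ZMod m) (hd : d ∈ D) (hd' : d' ∈ D)
    (hcd : Crosses m (i, j) d) (hcd' : Crosses m (i, j) d')
    (htl : d.1 = l ∨ d.2 = l) (htk : d'.1 = k ∨ d'.2 = k) :
    d.1 = d'.1 ∨ d.1 = d'.2 ∨ d.2 = d'.1 ∨ d.2 = d'.2 := by
  obtain ⟨u, v⟩ := d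
  obtain ⟨u', v'⟩ := d'
  have hij0 : (j - j).val = 0 := by simp
  have hUlt : (u - j).val < m := ZMod.val_lt _
  have hVlt : (v - j).val < m := ZMod.val_lt _
  have hU'lt : (u' - j).val < m := ZMod.val_lt _
  have hV'lt : (v' - j).val < m := ZMod.val_lt _
  have hLlt : (l - j).val < m := ZMod.val_lt _
  simp only at htl htk ⊢
  by_contra hcon
  push_neg at hcon
  obtain ⟨c1, c2, c3, c4⟩ := hcon
  rw [crosses_iff m j i j u v, hij0] at hcd
  rw [crosses_iff m j i j u' v', hij0] at hcd'
  -- the endpoint of d other than l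
  have hY : ∃ y : ZMod m, (y = u ∨ y = v) ∧ 0 < (y-j).val ∧ (y-j).val < (i-j).val ∧
      ((u-j).val = (l-j).val ∧ (v-j).val = (y-j).val ∨
       (v-j).val = (l-j).val ∧ (u-j).val = (y-j).val) := by
    rcases htl with h | h
    · subst h
      exact ⟨v, Or.inr rfl, by omega, by omega, by omega⟩
    · subst h
      exact ⟨u, Or.inl rfl, by omega, by omega, by omega⟩
  have hZ : ∃ z : ZMod m, (z = u' ∨ z = v') ∧ (i-j).val < (z-j).val ∧
      ((u'-j).val = (k-j).val ∧ (v'-j).val = (z-j).val ∨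
       (v'-j).val = (k-j).val ∧ (u'-j).val = (z-j).val) := by
    rcases htk with h | h
    · subst h
      exact ⟨v', Or.inr rfl, by omega, by omega⟩
    · subst h
      exact ⟨u', Or.inl rfl, by omega, by omega⟩
  obtain ⟨y, hymem, hy0, hyI, hyeq⟩ := hY
  obtain ⟨z, hzmem, hzI, hzeq⟩ := hZ
  -- y ≠ k as points, hence as positions
  have hyk : (y - j).val ≠ (k - j).val := by
    intro h
    have : y = k := pv_inj h
    subst this
    rcases hymem with h | h <;> rcases htk with h2 | h2 <;> subst h <;> simp_all
  -- z ≠ l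
  have hzl : (z - j).val ≠ (l - j).val := by
    intro h
    have : z = l := pv_inj h
    subst this
    rcases hzmem with h | h <;> rcases htl with h2 | h2 <;> subst h <;> simp_all
  -- K < Y, else d crosses (j,k)
  have hKY : (k - j).val < (y - j).val := by
    by_contra hlt
    push_neg at hlt
    exact hjk (u, v) hd (by rw [crosses_iff m j j k u v, hij0]; omega)
  -- Z < L, else d' crosses (j,l)
  have hZL : (z - j).val < (l - j).val := by
    by_contra hlt
    push_neg at hlt
    exact hjl (u', v') hd' (by rw [crosses_iff m j j l u' v', hij0]; omega)
  -- now d = {l, y}, d' = {k, z} with K < Y < I < Z < L : they cross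
  exact hnc (u, v) hd (u', v') hd' (by rw [crosses_iff m j u v u' v']; omega)
end C

section Counting
variable {α : Type*} [DecidableEq α]

/-- two chords have disjoint vertex sets -/
def DisjPair (e e' : α × α) : Prop :=
  e.1 ≠ e'.1 ∧ e.1 ≠ e'.2 ∧ e.2 ≠ e'.1 ∧ e.2 ≠ e'.2

instance (e e' : α × α) : Decidable (DisjPair e e') := by unfold DisjPair; infer_instance

/-- a set of chords is independent if pairwise vertex-disjoint -/
def IndepP (T : Finset (α × α)) : Prop :=
  ∀ e ∈ T, ∀ e' ∈ T, e ≠ e' → DisjPair e e'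

instance : DecidablePred (IndepP (α := α)) := fun _ => by unfold IndepP; infer_instance

/-- number of independent subsets -/
def Ncount (S : Finset (α × α)) : ℕ := (S.powerset.filter IndepP).card

theorem Ncount_empty : Ncount (∅ : Finset (α × α)) = 1 := by
  rw [Ncount, Finset.powerset_empty, Finset.filter_singleton]
  simp [IndepP]

theorem Ncount_split (S : Finset (α × α)) (k₀ l₀ : α) (hmem : (k₀, l₀) ∈ S) (hkl : k₀ ≠ l₀)
    (huniq : ∀ e ∈ S, (e.1 = k₀ ∨ e.2 = k₀) → (e.1 = l₀ ∨ e.2 = l₀) → e = (k₀, l₀))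
    (hconf : ∀ e ∈ S, ∀ e' ∈ S, (e.1 = l₀ ∨ e.2 = l₀) → (e'.1 = k₀ ∨ e'.2 = k₀) → e ≠ e' →
      ¬ DisjPair e e') :
    Ncount S = Ncount (S.filter (fun e => e.1 ≠ k₀ ∧ e.2 ≠ k₀)) +
      Ncount (S.filter (fun e => e.1 ≠ l₀ ∧ e.2 ≠ l₀)) := by
  classical
  set Sk := S.filter (fun e => e.1 ≠ k₀ ∧ e.2 ≠ k₀) with hSk
  set Sl := S.filter (fun e => e.1 ≠ l₀ ∧ e.2 ≠ l₀) with hSl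
  set P := S.powerset.filter IndepP with hP
  -- split by membership of (k₀,l₀)
  have hsplit : (P.filter (fun T => (k₀,l₀) ∈ T)).card +
      (P.filter (fun T => (k₀,l₀) ∉ T)).card = P.card :=
    Finset.card_filter_add_card_filter_not _
  -- first part: bijection with independent subsets of Sk ∩ Sl
  have h1 : (P.filter (fun T => (k₀,l₀) ∈ T)).card = Ncount (Sk ∩ Sl) := by
    rw [Ncount]
    apply Finset.card_nbij' (i := fun T => T.erase (k₀,l₀)) (j := fun T => insert (k₀,l₀) T)
    · intro T hT
      simp only [hP, Finset.mem_coe, Finset.mem_filter, Finset.mem_powerset] at hT ⊢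
      obtain ⟨⟨hTS, hind⟩, hklT⟩ := hT
      constructor
      · intro e he
        rw [Finset.mem_erase] at he
        obtain ⟨hne, heT⟩ := he
        have hdisj := hind e heT _ hklT hne
        rw [Finset.mem_inter, hSk, hSl, Finset.mem_filter, Finset.mem_filter]
        obtain ⟨a1, a2, a3, a4⟩ := hdisj
        exact ⟨⟨hTS heT, a1, a3⟩, hTS heT, a2, a4⟩
      · intro e he e' he' hne
        exact hind e (Finset.mem_of_mem_erase he) e' (Finset.mem_of_mem_erase he') hne
    · intro T hT
      simp only [Finset.mem_coe, Finset.mem_filter, Finset.mem_powerset] at hT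
      obtain ⟨hTS, hind⟩ := hT
      have hsub : ∀ e ∈ T, e ∈ Sk ∩ Sl := fun e he => hTS he
      refine Finset.mem_coe.mpr (Finset.mem_filter.mpr ⟨Finset.mem_filter.mpr
        ⟨Finset.mem_powerset.mpr ?_, ?_⟩, Finset.mem_insert_self _ _⟩)
      · intro e he
        rcases Finset.mem_insert.mp he with h | h
        · subst h; exact hmem
        · have := hsub e h
          rw [Finset.mem_inter, hSk, Finset.mem_filter] at this
          exact this.1.1
      · intro e he e' he' hne
        have key : ∀ f ∈ T, DisjPair f (k₀, l₀) ∧ DisjPair (k₀, l₀) f := by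
          intro f hf
          have := hsub f hf
          rw [Finset.mem_inter, hSk, hSl, Finset.mem_filter, Finset.mem_filter] at this
          obtain ⟨⟨_, b1, b2⟩, _, b3, b4⟩ := this
          exact ⟨⟨b1, b3, b2, b4⟩, ⟨Ne.symm b1, Ne.symm b2, Ne.symm b3, Ne.symm b4⟩⟩
        rcases Finset.mem_insert.mp he with h | h <;> rcases Finset.mem_insert.mp he' with h' | h'
        · subst h; subst h'; exact absurd rfl hne
        · subst h; exact (key e' h').2
        · subst h'; exact (key e h).1
        · exact hind e h e' h' hne
    · intro T hT
      simp only [Finset.mem_coe, Finset.mem_filter] at hT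
      exact Finset.insert_erase hT.2
    · intro T hT
      simp only [Finset.mem_coe, Finset.mem_filter, Finset.mem_powerset] at hT
      apply Finset.erase_insert
      intro hklT
      have := hT.1 hklT
      rw [Finset.mem_inter, hSk, Finset.mem_filter] at this
      exact this.1.2.1 rfl
  -- second part: inclusion-exclusion
  have h2 : (P.filter (fun T => (k₀,l₀) ∉ T)).card + Ncount (Sk ∩ Sl) =
      Ncount Sk + Ncount Sl := by
    have hXY : P.filter (fun T => (k₀,l₀) ∉ T) =
        Sk.powerset.filter IndepP ∪ Sl.powerset.filter IndepP := by
      ext T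
      simp only [hP, Finset.mem_union, Finset.mem_filter, Finset.mem_powerset]
      constructor
      · rintro ⟨⟨hTS, hind⟩, hklT⟩
        by_cases hk : ∃ e ∈ T, e.1 = k₀ ∨ e.2 = k₀
        · right
          refine ⟨?_, hind⟩
          intro e he
          rw [hSl, Finset.mem_filter]
          refine ⟨hTS he, ?_, ?_⟩ <;>
          · intro heq
            obtain ⟨e', he', hk'⟩ := hk
            by_cases hee' : e = e'
            · subst hee'
              exact hklT (by rw [← huniq e (hTS he) hk' (by tauto)]; exact he)
            · exact hconf e (hTS he) e' (hTS he') (by tauto) hk' hee' (hind e he e' he' hee')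
        · left
          push_neg at hk
          refine ⟨?_, hind⟩
          intro e he
          rw [hSk, Finset.mem_filter]
          exact ⟨hTS he, (hk e he).1, (hk e he).2⟩
      · rintro (⟨hTS, hind⟩ | ⟨hTS, hind⟩)
        · refine ⟨⟨fun e he => (Finset.mem_filter.mp (hTS he)).1, hind⟩, fun hklT => ?_⟩
          exact (Finset.mem_filter.mp (hTS hklT)).2.1 rfl
        · refine ⟨⟨fun e he => (Finset.mem_filter.mp (hTS he)).1, hind⟩, fun hklT => ?_⟩
          exact (Finset.mem_filter.mp (hTS hklT)).2.2 rfl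
    have hXiY : Sk.powerset.filter IndepP ∩ Sl.powerset.filter IndepP =
        (Sk ∩ Sl).powerset.filter IndepP := by
      ext T
      simp only [Finset.mem_inter, Finset.mem_filter, Finset.mem_powerset,
        Finset.subset_inter_iff]
      tauto
    have h3 := Finset.card_union_add_card_inter (Sk.powerset.filter IndepP)
      (Sl.powerset.filter IndepP)
    rw [hXiY] at h3
    rw [hXY]
    unfold Ncount
    exact h3
  have : Ncount S = P.card := rfl
  omega
end Counting

instance {m : ℕ} [NeZero m] (d d' : ZMod m × ZMod m) : Decidable (Crosses m d d') := by
  unfold Crosses StrBtw; infer_instance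

/-- normalize a chord so its endpoints are sorted by `val` -/
def normp {m : ℕ} [NeZero m] (e : ZMod m × ZMod m) : ZMod m × ZMod m :=
  if e.1.val ≤ e.2.val then e else (e.2, e.1)

theorem normp_normp {m : ℕ} [NeZero m] (e : ZMod m × ZMod m) : normp (normp e) = normp e := by
  unfold normp
  split_ifs <;> simp_all <;> omega

theorem normp_touch {m : ℕ} [NeZero m] (e : ZMod m × ZMod m) (x : ZMod m) :
    ((normp e).1 = x ∨ (normp e).2 = x) ↔ (e.1 = x ∨ e.2 = x) := by
  unfold normp
  split_ifs <;> simp <;> tauto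

theorem normp_swap {m : ℕ} [NeZero m] {k l : ZMod m} (h : k ≠ l) :
    normp (l, k) = normp (k, l) := by
  unfold normp
  split_ifs with h1 h2 h2 <;> simp_all
  · exact absurd (ZMod.val_injective _ (le_antisymm h2 h1)) h
  · omega

theorem normp_cases {m : ℕ} [NeZero m] (k l : ZMod m) :
    normp (k, l) = (k, l) ∨ normp (k, l) = (l, k) := by
  unfold normp
  split_ifs <;> simp

theorem disjPair_symm {m : ℕ} [NeZero m] {e e' : ZMod m × ZMod m} (h : DisjPair e e') :
    DisjPair e' e := by
  obtain ⟨a, b, c, d⟩ := h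
  exact ⟨Ne.symm a, Ne.symm c, Ne.symm b, Ne.symm d⟩

theorem normp_shares {m : ℕ} [NeZero m] (d d' : ZMod m × ZMod m)
    (h : d.1 = d'.1 ∨ d.1 = d'.2 ∨ d.2 = d'.1 ∨ d.2 = d'.2) :
    ¬ DisjPair (normp d) (normp d') := by
  unfold normp DisjPair
  split_ifs <;> simp <;> tauto

/-- the set of (normalized) diagonals of `D` crossed by the chord `(a,b)` -/
def CrSet {m : ℕ} [NeZero m] (D : Finset (ZMod m × ZMod m)) (a b : ZMod m) :
    Finset (ZMod m × ZMod m) :=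
  (D.filter (fun d => Crosses m (a, b) d)).image normp

theorem crSet_comm {m : ℕ} [NeZero m] (D : Finset (ZMod m × ZMod m)) (a b : ZMod m) :
    CrSet D a b = CrSet D b a := by
  unfold CrSet
  congr 1
  apply Finset.filter_congr
  intro d _
  exact crosses_swap_left a b d

theorem crSet_filter {m : ℕ} [NeZero m] (D : Finset (ZMod m × ZMod m)) (i x j x' : ZMod m)
    (hpt : ∀ d ∈ D, Crosses m (i, x) d ↔ (Crosses m (i, j) d ∧ d.1 ≠ x' ∧ d.2 ≠ x')) :
    CrSet D i x = (CrSet D i j).filter (fun e => e.1 ≠ x' ∧ e.2 ≠ x') := by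
  unfold CrSet
  rw [Finset.filter_image, Finset.filter_filter]
  congr 1
  apply Finset.filter_congr
  intro d hd
  rw [hpt d hd]
  constructor
  · rintro ⟨h1, h2, h3⟩
    refine ⟨h1, ?_, ?_⟩ <;>
    · intro he
      have := (normp_touch d x').mp (by tauto)
      tauto
  · rintro ⟨h1, h2, h3⟩
    refine ⟨h1, ?_, ?_⟩ <;>
    · intro he
      have := (normp_touch d x').mpr (by tauto)
      tauto


/-- Let `D` be a polygon dissection of the `(n+3)`-gon `P` (a set of pairwise
non-crossing diagonals) and let `m : (i,j) ↦ m_R(i,j)` satisfy the defining rules: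
`m(i,i) = 0`; `m(i,j) = 1` if `j ≠ i` lies in a piece of the dissection containing `i`
(i.e. `(i,j)` crosses no diagonal of `D`); and `m(i,j) = m(i,k) + m(i,ℓ)` whenever
`(k,ℓ) ∈ D` separates `j` from `i` and `j` lies in the piece adjacent to `(k,ℓ)`
(i.e. `(i,j)` crosses `(k,ℓ)` while `(j,k)` and `(j,ℓ)` cross no diagonal of `D`).
Then `m` is symmetric: `m(i,j) = m(j,i)` for all vertices `i`, `j`. -/
theorem stmt_13 (n : ℕ) (D : Finset (ZMod (n + 3) × ZMod (n + 3)))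
    (hdiagonal : ∀ d ∈ D, d.1 ≠ d.2 ∧ d.2 ≠ d.1 + 1 ∧ d.1 ≠ d.2 + 1)
    (hnoncross : ∀ d ∈ D, ∀ d' ∈ D, ¬ Crosses (n + 3) d d')
    (m : ZMod (n + 3) → ZMod (n + 3) → ℕ)
    (hrefl : ∀ i, m i i = 0)
    (hpiece : ∀ i j, i ≠ j → (∀ d ∈ D, ¬ Crosses (n + 3) (i, j) d) → m i j = 1)
    (hrec : ∀ i j k l, (k, l) ∈ D → Crosses (n + 3) (i, j) (k, l) →
      (∀ d ∈ D, ¬ Crosses (n + 3) (j, k) d) → (∀ d ∈ D, ¬ Crosses (n + 3) (j, l) d) →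
      m i j = m i k + m i l) :
    ∀ i j, m i j = m j i := by
  classical
  -- base case helper
  have base : ∀ i j : ZMod (n+3), i ≠ j → CrSet D i j = ∅ → m i j = Ncount (CrSet D i j) := by
    intro i j hij hemp
    have hnocross : ∀ d ∈ D, ¬ Crosses (n+3) (i, j) d := by
      intro d hd hcr
      have : normp d ∈ CrSet D i j :=
        Finset.mem_image_of_mem _ (Finset.mem_filter.mpr ⟨hd, hcr⟩)
      rw [hemp] at this
      exact absurd this (Finset.notMem_empty _)
    rw [hpiece i j hij hnocross, hemp, Ncount_empty]
  have main : ∀ c : ℕ, ∀ i j : ZMod (n+3), i ≠ j → (CrSet D i j).card ≤ c →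
      m i j = Ncount (CrSet D i j) := by
    intro c
    induction c with
    | zero =>
      intro i j hij hc
      exact base i j hij (Finset.card_eq_zero.mp (Nat.le_zero.mp hc))
    | succ c ih =>
      intro i j hij hc
      by_cases hemp : CrSet D i j = ∅
      · exact base i j hij hemp
      · -- find the diagonal (k,l) bounding the piece of j
        have hA : ∃ d ∈ D, Crosses (n+3) (i, j) d := by
          obtain ⟨e, he⟩ := Finset.nonempty_of_ne_empty hemp
          obtain ⟨d, hdm, _⟩ := Finset.mem_image.mp he
          exact ⟨d, (Finset.mem_filter.mp hdm).1, (Finset.mem_filter.mp hdm).2⟩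
        obtain ⟨k, l, hklm, hK0, hKI, hIL, hjk, hjl⟩ := exists_near hnoncross i j hA
        have hij0 : (j - j).val = 0 := by simp
        have hik : i ≠ k := by intro h; rw [h] at hKI; omega
        have hil : i ≠ l := by intro h; rw [h] at hIL; omega
        have hkl : k ≠ l := by intro h; rw [h] at hKI; omega
        have hcrossij : Crosses (n+3) (i, j) (k, l) := by
          rw [crosses_iff (n+3) j i j k l, hij0]; omega
        have hrec' : m i j = m i k + m i l := by
          rcases hklm with h | h
          · exact hrec i j k l h hcrossij hjk hjl
          · rw [hrec i j l k h ((crosses_swap_right _ k l).mp hcrossij) hjl hjk]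
            exact Nat.add_comm _ _
        have hCk : CrSet D i k = (CrSet D i j).filter (fun e => e.1 ≠ k ∧ e.2 ≠ k) :=
          crSet_filter D i k j k (cross_ik_iff hnoncross hklm hK0 hKI hIL hjk hjl)
        have hCl : CrSet D i l = (CrSet D i j).filter (fun e => e.1 ≠ l ∧ e.2 ≠ l) :=
          crSet_filter D i l j l (cross_il_iff hnoncross hklm hK0 hKI hIL hjk hjl)
        have hs₀mem : normp (k, l) ∈ CrSet D i j := by
          rcases hklm with h | h
          · exact Finset.mem_image_of_mem _ (Finset.mem_filter.mpr ⟨h, hcrossij⟩)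
          · rw [← normp_swap hkl]
            exact Finset.mem_image_of_mem _ (Finset.mem_filter.mpr
              ⟨h, (crosses_swap_right _ k l).mp hcrossij⟩)
        have hs₀k : (normp (k, l)).1 = k ∨ (normp (k, l)).2 = k :=
          (normp_touch (k, l) k).mpr (Or.inl rfl)
        have hs₀l : (normp (k, l)).1 = l ∨ (normp (k, l)).2 = l :=
          (normp_touch (k, l) l).mpr (Or.inr rfl)
        -- cardinalities decrease
        have hcard : ∀ x' : ZMod (n+3), ((normp (k,l)).1 = x' ∨ (normp (k,l)).2 = x') →
            ((CrSet D i j).filter (fun e => e.1 ≠ x' ∧ e.2 ≠ x')).card < (CrSet D i j).card := by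
          intro x' hx'
          apply Finset.card_lt_card
          rw [Finset.ssubset_iff_of_subset (Finset.filter_subset _ _)]
          refine ⟨normp (k,l), hs₀mem, fun hmem' => ?_⟩
          have := (Finset.mem_filter.mp hmem').2
          tauto
        -- uniqueness: only normp (k,l) touches both k and l
        have huniq : ∀ e ∈ CrSet D i j, (e.1 = k ∨ e.2 = k) → (e.1 = l ∨ e.2 = l) →
            e = normp (k, l) := by
          intro e he htk htl
          obtain ⟨d, _, hde⟩ := Finset.mem_image.mp he
          have hfix : normp e = e := by rw [← hde, normp_normp]
          have hcases : e = (k, l) ∨ e = (l, k) := by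
            obtain ⟨e1, e2⟩ := e
            simp only at htk htl ⊢
            rcases htk with h | h <;> rcases htl with h' | h' <;> subst h <;>
              first
                | (exfalso; exact hkl (by rw [h']))
                | (subst h'; tauto)
          rcases hcases with h | h
          · rw [← hfix, h]
          · rw [← hfix, h, normp_swap hkl]
        -- conflict: a diagonal through l and one through k must share a vertex
        have hconf : ∀ e ∈ CrSet D i j, ∀ e' ∈ CrSet D i j,
            (e.1 = l ∨ e.2 = l) → (e'.1 = k ∨ e'.2 = k) → e ≠ e' → ¬ DisjPair e e' := by
          intro e he e' he' htl htk _
          obtain ⟨d, hdm, hde⟩ := Finset.mem_image.mp he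
          obtain ⟨d', hdm', hde'⟩ := Finset.mem_image.mp he'
          rw [← hde, ← hde']
          apply normp_shares
          exact share_vertex hnoncross hklm hK0 hKI hIL hjk hjl d d'
            (Finset.mem_filter.mp hdm).1 (Finset.mem_filter.mp hdm').1
            (Finset.mem_filter.mp hdm).2 (Finset.mem_filter.mp hdm').2
            ((normp_touch d l).mp (by rw [hde]; exact htl))
            ((normp_touch d' k).mp (by rw [hde']; exact htk))
        have hconf' : ∀ e ∈ CrSet D i j, ∀ e' ∈ CrSet D i j,
            (e.1 = k ∨ e.2 = k) → (e'.1 = l ∨ e'.2 = l) → e ≠ e' → ¬ DisjPair e e' := by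
          intro e he e' he' htk htl hne hdisj
          exact hconf e' he' e he htl htk (Ne.symm hne) (disjPair_symm hdisj)
        -- apply the counting identity
        have hsplit : Ncount (CrSet D i j) = Ncount (CrSet D i k) + Ncount (CrSet D i l) := by
          rcases normp_cases k l with hn | hn
          · have := Ncount_split (CrSet D i j) k l (hn ▸ hs₀mem) hkl
              (fun e he h1 h2 => by rw [huniq e he h1 h2, hn]) hconf
            rw [this, hCk, hCl]
          · have := Ncount_split (CrSet D i j) l k (hn ▸ hs₀mem)
              (Ne.symm hkl) (fun e he h1 h2 => by rw [huniq e he h2 h1, hn]) hconf'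
            rw [this, hCk, hCl, Nat.add_comm]
        rw [hrec', hsplit,
          ih i k hik (by rw [hCk]; have := hcard k hs₀k; omega),
          ih i l hil (by rw [hCl]; have := hcard l hs₀l; omega)]
  intro i j
  by_cases hij : i = j
  · rw [hij]
  · rw [main _ i j hij le_rfl, main _ j i (Ne.symm hij) le_rfl, crSet_comm]
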